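/- arXiv:1701.06231 — 2 statements merged into one kernel-verified Lean document; each statement's English description precedes it below -/
import Mathlib

section
/- Fix K₁ ∈ (−1,1), K₂ ∈ (0,1) with K₁ < K₂, and let f(s) = (s−K₁)⁺ − (s−K₂)⁺. Define f̄ on the triangle Δ = {(β,γ) : β ≥ 0, γ ≥ 0, β + γ ≤ 1} by f̄(β,γ) := f(2γ + β − 1). Define V on Δ by: V(β,γ) = K₂ − K₁ if 2γ + β − 1 ≥ K₂; V(β,γ) = (2γ+β)(K₂−K₁)/(K₂+1) if γ/(γ+β) ≥ K₂ > 2γ+β−1; V(β,γ) = γ(K₂−K₁)/K₂ if K₂ > γ/(γ+β) and 0 ≤ K₁; V(β,γ) = γ(1−K₁) − βK₁ if K₂ > γ/(γ+β) and 0 > K₁. Then V is concave on Δ and V ≥ f̄ on Δ. -/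
open Set

set_option maxHeartbeats 2000000 in
/-- for the call spread `f(s) = (s−K₁)⁺ − (s−K₂)⁺` with `K₁ ∈ (−1,1)`,
`K₂ ∈ (0,1)`, `K₁ < K₂`, the piecewise function `V` on the triangle
`Δ = {(β,γ) : β,γ ≥ 0, β+γ ≤ 1}` is concave and dominates `f̄(β,γ) = f(2γ+β−1)`. -/
theorem stmt10 (K₁ K₂ : ℝ) (hK₁ : K₁ ∈ Ioo (-1:ℝ) 1) (hK₂ : K₂ ∈ Ioo (0:ℝ) 1) (hK : K₁ < K₂)
    (f : ℝ → ℝ) (hf : ∀ s, f s = max (s - K₁) 0 - max (s - K₂) 0)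
    (Δ : Set (ℝ × ℝ)) (hΔ : Δ = {p | 0 ≤ p.1 ∧ 0 ≤ p.2 ∧ p.1 + p.2 ≤ 1})
    (fbar : ℝ × ℝ → ℝ) (hfbar : ∀ p, fbar p = f (2 * p.2 + p.1 - 1))
    (V : ℝ × ℝ → ℝ)
    (hV : ∀ p : ℝ × ℝ, V p =
      if K₂ ≤ 2 * p.2 + p.1 - 1 then K₂ - K₁
      else if K₂ ≤ p.2 / (p.2 + p.1) then (2 * p.2 + p.1) * (K₂ - K₁) / (K₂ + 1)
      else if 0 ≤ K₁ then p.2 * (K₂ - K₁) / K₂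
      else p.2 * (1 - K₁) - p.1 * K₁) :
    ConcaveOn ℝ Δ V ∧ ∀ p ∈ Δ, fbar p ≤ V p := by
  obtain ⟨hK1l, hK1u⟩ := hK₁
  obtain ⟨hK2l, hK2u⟩ := hK₂
  have hK2p : (0:ℝ) < K₂ + 1 := by linarith
  have hKd : (0:ℝ) ≤ K₂ - K₁ := by linarith
  set T : ℝ × ℝ → ℝ := fun p =>
    if 0 ≤ K₁ then p.2 * (K₂ - K₁) / K₂ else p.2 * (1 - K₁) - p.1 * K₁ with hT
  set W : ℝ × ℝ → ℝ := fun p =>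
    min (K₂ - K₁) (min ((2 * p.2 + p.1) * (K₂ - K₁) / (K₂ + 1)) (T p)) with hW
  have hWp : ∀ p, W p = min (K₂ - K₁) (min ((2 * p.2 + p.1) * (K₂ - K₁) / (K₂ + 1)) (T p)) :=
    fun p => rfl
  have hTpos : ∀ p : ℝ × ℝ, T p = p.2 * (K₂ - K₁) / K₂ ∨ T p = p.2 * (1 - K₁) - p.1 * K₁ := by
    intro p
    simp only [hT]
    split_ifs <;> [left; right] <;> rfl
  -- convexity of the triangle
  have hconv : Convex ℝ Δ := by
    rw [hΔ]
    intro x hx y hy s t hs ht hst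
    simp only [mem_setOf_eq, Prod.fst_add, Prod.snd_add, Prod.smul_fst, Prod.smul_snd,
      smul_eq_mul] at *
    refine ⟨by nlinarith [mul_nonneg hs hx.1, mul_nonneg ht hy.1],
      by nlinarith [mul_nonneg hs hx.2.1, mul_nonneg ht hy.2.1], ?_⟩
    nlinarith [mul_le_mul_of_nonneg_left hx.2.2 hs, mul_le_mul_of_nonneg_left hy.2.2 ht]
  -- T is linear
  have hTlin : ∀ (s t : ℝ) (x y : ℝ × ℝ), s * T x + t * T y = T (s • x + t • y) := by
    intro s t x y
    simp only [hT, Prod.fst_add, Prod.snd_add, Prod.smul_fst, Prod.smul_snd, smul_eq_mul]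
    split_ifs with h
    · field_simp
    · ring
  -- V = W on Δ
  have hVW : ∀ p ∈ Δ, V p = W p := by
    intro p hp
    rw [hΔ] at hp
    obtain ⟨hb, hg, hs⟩ := hp
    rw [hV, hWp p]
    split_ifs with h1 h2 h3
    · -- region 1: K₂ ≤ 2γ+β-1
      have hA2 : K₂ - K₁ ≤ (2 * p.2 + p.1) * (K₂ - K₁) / (K₂ + 1) := by
        rw [le_div_iff₀ hK2p]; nlinarith
      have hA3 : K₂ - K₁ ≤ T p := by
        simp only [hT]
        split_ifs with h3
        · rw [le_div_iff₀ hK2l]; nlinarith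
        · nlinarith [mul_nonneg (by linarith : (0:ℝ) ≤ 1 - p.1 - p.2)
            (by linarith : (0:ℝ) ≤ 1 + K₁)]
      rw [min_eq_left (le_min hA2 hA3)]
    · -- region 2: K₂ ≤ γ/(γ+β), 2γ+β-1 < K₂
      have hpos : 0 < p.2 + p.1 := by
        rcases lt_or_ge 0 (p.2 + p.1) with h | h
        · exact h
        · exfalso
          have hz : p.2 + p.1 = 0 := le_antisymm h (by linarith)
          rw [hz, div_zero] at h2; linarith
      have hkey : K₂ * (p.2 + p.1) ≤ p.2 := by
        rw [le_div_iff₀ hpos] at h2; linarith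
      have hA1 : (2 * p.2 + p.1) * (K₂ - K₁) / (K₂ + 1) ≤ K₂ - K₁ := by
        rw [div_le_iff₀ hK2p]; nlinarith
      have hA3 : (2 * p.2 + p.1) * (K₂ - K₁) / (K₂ + 1) ≤ T p := by
        simp only [hT]
        split_ifs with h3
        · rw [div_le_div_iff₀ hK2p hK2l]
          nlinarith [mul_le_mul_of_nonneg_right hkey hKd]
        · rw [div_le_iff₀ hK2p]
          nlinarith [mul_nonneg (by linarith : (0:ℝ) ≤ 1 + K₁)
            (by linarith : (0:ℝ) ≤ p.2 - K₂ * (p.2 + p.1))]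
      rw [min_eq_left hA3, min_eq_right hA1]
    · -- region 3: K₁ ≥ 0, γ/(γ+β) < K₂
      have hTp : T p = p.2 * (K₂ - K₁) / K₂ := by simp only [hT]; rw [if_pos h3]
      rcases eq_or_lt_of_le (by linarith : (0:ℝ) ≤ p.2 + p.1) with hz | hpos
      · have hb0 : p.1 = 0 := by linarith
        have hg0 : p.2 = 0 := by linarith
        rw [hTp, hb0, hg0]
        norm_num
        linarith
      · have hkey : p.2 ≤ K₂ * (p.2 + p.1) := by
          push_neg at h2
          rw [div_lt_iff₀ hpos] at h2; linarith
        have hgK : p.2 ≤ K₂ := by nlinarith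
        have hA1 : p.2 * (K₂ - K₁) / K₂ ≤ K₂ - K₁ := by
          rw [div_le_iff₀ hK2l]; nlinarith
        have hA2 : p.2 * (K₂ - K₁) / K₂ ≤ (2 * p.2 + p.1) * (K₂ - K₁) / (K₂ + 1) := by
          rw [div_le_div_iff₀ hK2l hK2p]
          nlinarith [mul_le_mul_of_nonneg_right hkey hKd]
        rw [hTp, min_eq_right hA2, min_eq_right hA1]
    · -- region 4: K₁ < 0, γ/(γ+β) < K₂
      have hTp : T p = p.2 * (1 - K₁) - p.1 * K₁ := by simp only [hT]; rw [if_neg h3]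
      push_neg at h3
      have hkey : p.2 ≤ K₂ * (p.2 + p.1) := by
        rcases eq_or_lt_of_le (by linarith : (0:ℝ) ≤ p.2 + p.1) with hz | hpos
        · nlinarith
        · push_neg at h2
          rw [div_lt_iff₀ hpos] at h2; linarith
      have hgK : p.2 ≤ K₂ := by nlinarith
      have hA1 : p.2 * (1 - K₁) - p.1 * K₁ ≤ K₂ - K₁ := by
        nlinarith [mul_nonneg (by linarith : (0:ℝ) ≤ -K₁)
          (by linarith : (0:ℝ) ≤ 1 - p.1 - p.2)]
      have hA2 : p.2 * (1 - K₁) - p.1 * K₁ ≤ (2 * p.2 + p.1) * (K₂ - K₁) / (K₂ + 1) := by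
        rw [le_div_iff₀ hK2p]
        have hint := mul_nonneg (by linarith : (0:ℝ) ≤ 1 + K₁)
          (by linarith : (0:ℝ) ≤ K₂ * (p.2 + p.1) - p.2)
        nlinarith [hint]
      rw [hTp, min_eq_right hA2, min_eq_right hA1]
  -- fbar ≤ W on Δ
  have hfW : ∀ p ∈ Δ, fbar p ≤ W p := by
    intro p hp
    rw [hΔ] at hp
    obtain ⟨hb, hg, hs⟩ := hp
    rw [hfbar, hf, hWp p]
    set x := 2 * p.2 + p.1 - 1 with hx
    have hx1 : x ≤ 1 := by rw [hx]; linarith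
    have hxm : -1 ≤ x := by rw [hx]; linarith
    have hxg : x ≤ p.2 := by rw [hx]; linarith
    have hx2 : 2 * p.2 + p.1 = x + 1 := by rw [hx]; ring
    refine le_min ?_ (le_min ?_ ?_)
    · have m1 : max (x - K₁) 0 ≤ max (x - K₂) 0 + (K₂ - K₁) :=
        max_le (by nlinarith [le_max_left (x - K₂) (0:ℝ)])
          (by nlinarith [le_max_right (x - K₂) (0:ℝ)])
      linarith
    · rw [hx2, le_div_iff₀ hK2p]
      rcases max_cases (x - K₁) (0:ℝ) with ⟨e1, i1⟩ | ⟨e1, i1⟩ <;>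
        rcases max_cases (x - K₂) (0:ℝ) with ⟨e2, i2⟩ | ⟨e2, i2⟩ <;>
        rw [e1, e2] <;> nlinarith
    · by_cases h3 : 0 ≤ K₁
      · have hTp : T p = p.2 * (K₂ - K₁) / K₂ := by simp only [hT, if_pos h3]
        rw [hTp, le_div_iff₀ hK2l]
        rcases max_cases (x - K₁) (0:ℝ) with ⟨e1, i1⟩ | ⟨e1, i1⟩ <;>
          rcases max_cases (x - K₂) (0:ℝ) with ⟨e2, i2⟩ | ⟨e2, i2⟩ <;>
          rw [e1, e2]
        · nlinarith [mul_le_mul_of_nonneg_right (show K₂ ≤ p.2 by linarith) hKd]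
        · nlinarith [mul_le_mul_of_nonneg_right hxg hKd,
            mul_nonneg h3 (by linarith : (0:ℝ) ≤ K₂ - x)]
        · linarith
        · nlinarith [mul_nonneg hg hKd]
      · have hTp : T p = p.2 * (1 - K₁) - p.1 * K₁ := by simp only [hT, if_neg h3]
        rw [hTp]
        push_neg at h3
        have hint1 : (0:ℝ) ≤ (1 - p.1 - p.2) * (1 + K₁) :=
          mul_nonneg (by linarith) (by linarith)
        have hint2 : (0:ℝ) ≤ p.2 * (1 - K₁) :=
          mul_nonneg hg (by linarith)
        have hint3 : (0:ℝ) ≤ p.1 * (-K₁) :=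
          mul_nonneg hb (by linarith)
        rcases max_cases (x - K₁) (0:ℝ) with ⟨e1, i1⟩ | ⟨e1, i1⟩ <;>
          rcases max_cases (x - K₂) (0:ℝ) with ⟨e2, i2⟩ | ⟨e2, i2⟩ <;>
          rw [e1, e2] <;>
          nlinarith [hint1, hint2, hint3]
  constructor
  · refine ⟨hconv, ?_⟩
    intro x hx y hy s t hs ht hst
    rw [hVW x hx, hVW y hy, hVW _ (hconv hx hy hs ht hst)]
    have h1 : W x ≤ K₂ - K₁ := min_le_left _ _
    have h1' : W y ≤ K₂ - K₁ := min_le_left _ _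
    have h2 : W x ≤ (2 * x.2 + x.1) * (K₂ - K₁) / (K₂ + 1) :=
      le_trans (min_le_right _ _) (min_le_left _ _)
    have h2' : W y ≤ (2 * y.2 + y.1) * (K₂ - K₁) / (K₂ + 1) :=
      le_trans (min_le_right _ _) (min_le_left _ _)
    have h3 : W x ≤ T x := le_trans (min_le_right _ _) (min_le_right _ _)
    have h3' : W y ≤ T y := le_trans (min_le_right _ _) (min_le_right _ _)
    rw [hWp (s • x + t • y)]
    simp only [smul_eq_mul, Prod.fst_add, Prod.snd_add, Prod.smul_fst, Prod.smul_snd]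
    refine le_min ?_ (le_min ?_ ?_)
    · nlinarith [mul_le_mul_of_nonneg_left h1 hs, mul_le_mul_of_nonneg_left h1' ht]
    · have he : s * ((2 * x.2 + x.1) * (K₂ - K₁) / (K₂ + 1)) +
          t * ((2 * y.2 + y.1) * (K₂ - K₁) / (K₂ + 1)) =
          (2 * (s * x.2 + t * y.2) + (s * x.1 + t * y.1)) * (K₂ - K₁) / (K₂ + 1) := by
        field_simp; ring
      linarith [mul_le_mul_of_nonneg_left h2 hs, mul_le_mul_of_nonneg_left h2' ht, he.le]
    · have he := hTlin s t x y
      linarith [mul_le_mul_of_nonneg_left h3 hs, mul_le_mul_of_nonneg_left h3' ht, he.le]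
  · intro p hp
    rw [hVW p hp]
    exact hfW p hp
end

section
/- Let V be the piecewise function of the call-spread example on the triangle Δ (four cases as given). Then V is the concave envelope of f̄(β,γ) = (2γ+β−1−K₁)⁺ − (2γ+β−1−K₂)⁺ on Δ; that is, V is concave, V ≥ f̄, and any concave function h on Δ with h ≥ f̄ satisfies h ≥ V. -/
set_option maxHeartbeats 1000000


open Set

/-- the piecewise value function `V` of the call spread example is the concave
envelope of `f̄(β,γ) = (2γ+β−1−K₁)⁺ − (2γ+β−1−K₂)⁺` on the triangle `Δ`: it is concave,
dominates `f̄`, and every concave `h ≥ f̄` on `Δ` satisfies `h ≥ V` on `Δ`. -/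
theorem stmt12 (K₁ K₂ : ℝ) (hK₁ : K₁ ∈ Ioo (-1:ℝ) 1) (hK₂ : K₂ ∈ Ioo (0:ℝ) 1) (hK : K₁ < K₂)
    (Δ : Set (ℝ × ℝ)) (hΔ : Δ = {p | 0 ≤ p.1 ∧ 0 ≤ p.2 ∧ p.1 + p.2 ≤ 1})
    (fbar : ℝ × ℝ → ℝ)
    (hfbar : ∀ p : ℝ × ℝ, fbar p =
      max (2 * p.2 + p.1 - 1 - K₁) 0 - max (2 * p.2 + p.1 - 1 - K₂) 0)
    (V : ℝ × ℝ → ℝ)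
    (hV : ∀ p : ℝ × ℝ, V p =
      if K₂ ≤ 2 * p.2 + p.1 - 1 then K₂ - K₁
      else if K₂ ≤ p.2 / (p.2 + p.1) then (2 * p.2 + p.1) * (K₂ - K₁) / (K₂ + 1)
      else if 0 ≤ K₁ then p.2 * (K₂ - K₁) / K₂
      else p.2 * (1 - K₁) - p.1 * K₁) :
    ConcaveOn ℝ Δ V ∧ (∀ p ∈ Δ, fbar p ≤ V p) ∧
      ∀ h : ℝ × ℝ → ℝ, ConcaveOn ℝ Δ h → (∀ p ∈ Δ, fbar p ≤ h p) →
        ∀ p ∈ Δ, V p ≤ h p := by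
  obtain ⟨hK₁l, hK₁u⟩ := hK₁
  obtain ⟨hK₂l, hK₂u⟩ := hK₂
  have hconv : Convex ℝ Δ := by
    rw [hΔ]
    intro x hx y hy a b ha hb hab
    simp only [mem_setOf_eq, Prod.fst_add, Prod.snd_add, Prod.smul_fst, Prod.smul_snd,
      smul_eq_mul] at *
    refine ⟨by nlinarith [hx.1, hy.1], by nlinarith [hx.2.1, hy.2.1], by nlinarith [hx.2.2, hy.2.2]⟩
  have hVW : ∀ p ∈ Δ, V p = min (min (K₂ - K₁) ((2 * p.2 + p.1) * (K₂ - K₁) / (K₂ + 1)))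
      (if 0 ≤ K₁ then p.2 * (K₂ - K₁) / K₂ else p.2 * (1 - K₁) - p.1 * K₁) := by
    intro p hp
    rw [hΔ] at hp
    obtain ⟨hx, hy, hxy⟩ := hp
    set β := p.1 with hβ
    set γ := p.2 with hγ
    have hKd : 0 < K₂ - K₁ := by linarith
    rw [hV]
    by_cases hc1 : K₂ ≤ 2 * γ + β - 1
    · rw [if_pos hc1]
      have hγK : K₂ ≤ γ := by linarith
      have hB : K₂ - K₁ ≤ (2 * γ + β) * (K₂ - K₁) / (K₂ + 1) := by
        rw [le_div_iff₀ (by linarith)]; nlinarith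
      have hC : K₂ - K₁ ≤ if 0 ≤ K₁ then γ * (K₂ - K₁) / K₂ else γ * (1 - K₁) - β * K₁ := by
        split_ifs with h0
        · rw [le_div_iff₀ hK₂l]; nlinarith
        · nlinarith
      rw [min_eq_left hB, min_eq_left hC]
    · rw [if_neg hc1]
      push_neg at hc1
      by_cases hc2 : K₂ ≤ γ / (γ + β)
      · rw [if_pos hc2]
        have hd : 0 < γ + β := by
          rcases lt_or_ge 0 (γ + β) with h | h
          · exact h
          · exfalso
            have hβ0 : β = 0 := by linarith
            have hγ0 : γ = 0 := by linarith
            rw [hβ0, hγ0] at hc2; norm_num at hc2; linarith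
        have hc2' : K₂ * (γ + β) ≤ γ := by
          rw [le_div_iff₀ hd] at hc2; linarith
        have hB1 : (2 * γ + β) * (K₂ - K₁) / (K₂ + 1) ≤ K₂ - K₁ := by
          rw [div_le_iff₀ (by linarith)]; nlinarith
        have hB2 : (2 * γ + β) * (K₂ - K₁) / (K₂ + 1) ≤
            if 0 ≤ K₁ then γ * (K₂ - K₁) / K₂ else γ * (1 - K₁) - β * K₁ := by
          split_ifs with h0
          · rw [div_le_div_iff₀ (by linarith) hK₂l]; nlinarith
          · rw [div_le_iff₀ (by linarith)]; nlinarith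
        rw [min_eq_right hB1, min_eq_left hB2]
      · rw [if_neg hc2]
        push_neg at hc2
        have hc2' : γ ≤ K₂ * (γ + β) := by
          rcases lt_or_ge 0 (γ + β) with h | h
          · rw [div_lt_iff₀ h] at hc2; linarith
          · have hβ0 : β = 0 := by linarith
            have hγ0 : γ = 0 := by linarith
            rw [hβ0, hγ0]; ring_nf; positivity
        have hγK : γ ≤ K₂ := by nlinarith
        split_ifs with h0
        · have h1 : γ * (K₂ - K₁) / K₂ ≤ K₂ - K₁ := by
            rw [div_le_iff₀ hK₂l]; nlinarith
          have h2 : γ * (K₂ - K₁) / K₂ ≤ (2 * γ + β) * (K₂ - K₁) / (K₂ + 1) := by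
            rw [div_le_div_iff₀ hK₂l (by linarith)]; nlinarith
          rw [min_eq_right (le_min h1 h2)]
        · push_neg at h0
          have h1 : γ * (1 - K₁) - β * K₁ ≤ K₂ - K₁ := by nlinarith
          have h2 : γ * (1 - K₁) - β * K₁ ≤ (2 * γ + β) * (K₂ - K₁) / (K₂ + 1) := by
            rw [le_div_iff₀ (by linarith)]; nlinarith
          rw [min_eq_right (le_min h1 h2)]
  refine ⟨?_, ?_, ?_⟩
  · refine ⟨hconv, ?_⟩
    intro x hx y hy a b ha hb hab
    have hz : a • x + b • y ∈ Δ := hconv hx hy ha hb hab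
    rw [hVW x hx, hVW y hy, hVW _ hz]
    simp only [smul_eq_mul, Prod.fst_add, Prod.snd_add, Prod.smul_fst, Prod.smul_snd,
      smul_eq_mul]
    set Wx := min (min (K₂ - K₁) ((2 * x.2 + x.1) * (K₂ - K₁) / (K₂ + 1)))
        (if 0 ≤ K₁ then x.2 * (K₂ - K₁) / K₂ else x.2 * (1 - K₁) - x.1 * K₁) with hWx
    set Wy := min (min (K₂ - K₁) ((2 * y.2 + y.1) * (K₂ - K₁) / (K₂ + 1)))
        (if 0 ≤ K₁ then y.2 * (K₂ - K₁) / K₂ else y.2 * (1 - K₁) - y.1 * K₁) with hWy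
    have hx1 : Wx ≤ K₂ - K₁ := le_trans (min_le_left _ _) (min_le_left _ _)
    have hx2 : Wx ≤ (2 * x.2 + x.1) * (K₂ - K₁) / (K₂ + 1) :=
      le_trans (min_le_left _ _) (min_le_right _ _)
    have hx3 : Wx ≤ (if 0 ≤ K₁ then x.2 * (K₂ - K₁) / K₂ else x.2 * (1 - K₁) - x.1 * K₁) :=
      min_le_right _ _
    have hy1 : Wy ≤ K₂ - K₁ := le_trans (min_le_left _ _) (min_le_left _ _)
    have hy2 : Wy ≤ (2 * y.2 + y.1) * (K₂ - K₁) / (K₂ + 1) :=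
      le_trans (min_le_left _ _) (min_le_right _ _)
    have hy3 : Wy ≤ (if 0 ≤ K₁ then y.2 * (K₂ - K₁) / K₂ else y.2 * (1 - K₁) - y.1 * K₁) :=
      min_le_right _ _
    refine le_min (le_min ?_ ?_) ?_
    · nlinarith [mul_le_mul_of_nonneg_left hx1 ha, mul_le_mul_of_nonneg_left hy1 hb]
    · have : (2 * (a * x.2 + b * y.2) + (a * x.1 + b * y.1)) * (K₂ - K₁) / (K₂ + 1)
          = a * ((2 * x.2 + x.1) * (K₂ - K₁) / (K₂ + 1))
            + b * ((2 * y.2 + y.1) * (K₂ - K₁) / (K₂ + 1)) := by ring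
      rw [this]
      exact add_le_add (mul_le_mul_of_nonneg_left hx2 ha) (mul_le_mul_of_nonneg_left hy2 hb)
    · split_ifs with h0
      · rw [if_pos h0] at hx3 hy3
        have : (a * x.2 + b * y.2) * (K₂ - K₁) / K₂
            = a * (x.2 * (K₂ - K₁) / K₂) + b * (y.2 * (K₂ - K₁) / K₂) := by ring
        rw [this]
        exact add_le_add (mul_le_mul_of_nonneg_left hx3 ha) (mul_le_mul_of_nonneg_left hy3 hb)
      · rw [if_neg h0] at hx3 hy3
        nlinarith [mul_le_mul_of_nonneg_left hx3 ha, mul_le_mul_of_nonneg_left hy3 hb]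
  · intro p hp
    rw [hΔ] at hp
    obtain ⟨hx, hy, hxy⟩ := hp
    rw [hVW p (by rw [hΔ]; exact ⟨hx, hy, hxy⟩), hfbar]
    have hm2 : (0:ℝ) ≤ max (2 * p.2 + p.1 - 1 - K₂) 0 := le_max_right _ _
    have hm2' : 2 * p.2 + p.1 - 1 - K₂ ≤ max (2 * p.2 + p.1 - 1 - K₂) 0 := le_max_left _ _
    refine le_min (le_min ?_ ?_) ?_
    · rcases le_total (2 * p.2 + p.1 - 1 - K₁) 0 with h | h
      · rw [max_eq_right h]; linarith
      · rw [max_eq_left h]; linarith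
    · rw [le_div_iff₀ (by linarith)]
      rcases le_total (2 * p.2 + p.1 - 1 - K₁) 0 with h | h
      · rw [max_eq_right h]; nlinarith
      · rw [max_eq_left h]
        rcases le_total (2 * p.2 + p.1 - 1 - K₂) 0 with h2 | h2
        · rw [max_eq_right h2]; nlinarith
        · rw [max_eq_left h2]; nlinarith
    · split_ifs with h0
      · rw [le_div_iff₀ hK₂l]
        rcases le_total (2 * p.2 + p.1 - 1 - K₁) 0 with h | h
        · rw [max_eq_right h]; nlinarith
        · rw [max_eq_left h]
          rcases le_total (2 * p.2 + p.1 - 1 - K₂) 0 with h2 | h2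
          · rw [max_eq_right h2]; nlinarith
          · rw [max_eq_left h2]; nlinarith
      · push_neg at h0
        rcases le_total (2 * p.2 + p.1 - 1 - K₁) 0 with h | h
        · rw [max_eq_right h]; nlinarith
        · rw [max_eq_left h]; nlinarith
  · intro h hcon hge p hp
    have h1K : (1:ℝ) - K₂ ≠ 0 := by linarith
    have h2K : (1:ℝ) + K₂ ≠ 0 := by linarith
    have hKne : K₂ ≠ 0 := ne_of_gt hK₂l
    -- three-point concavity
    have tri : ∀ p1 p2 p3 : ℝ × ℝ, p1 ∈ Δ → p2 ∈ Δ → p3 ∈ Δ →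
        ∀ a b c : ℝ, 0 ≤ a → 0 ≤ b → 0 ≤ c → a + b + c = 1 →
        a * h p1 + b * h p2 + c * h p3 ≤ h (a • p1 + b • p2 + c • p3) := by
      intro p1 p2 p3 h1 h2 h3 a b c ha hb hc habc
      by_cases hab : a + b = 0
      · have ha0 : a = 0 := by linarith
        have hb0 : b = 0 := by linarith
        have hc1 : c = 1 := by linarith
        simp [ha0, hb0, hc1]
      · have hab' : 0 < a + b := lt_of_le_of_ne (by linarith) (Ne.symm hab)
        set q := (a / (a + b)) • p1 + (b / (a + b)) • p2 with hq
        have hqΔ : q ∈ Δ := hconv h1 h2 (by positivity) (by positivity)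
          (by field_simp)
        have hq2 := hcon.2 h1 h2 (by positivity : (0:ℝ) ≤ a / (a + b))
          (by positivity : (0:ℝ) ≤ b / (a + b)) (by field_simp)
        have hq3 := hcon.2 hqΔ h3 (le_of_lt hab') hc (by linarith)
        have hqeq : (a + b) • q + c • p3 = a • p1 + b • p2 + c • p3 := by
          rw [hq, smul_add, smul_smul, smul_smul]
          congr 2 <;> field_simp
        rw [hqeq] at hq3
        simp only [smul_eq_mul] at hq2 hq3
        have hmul := mul_le_mul_of_nonneg_left hq2 (le_of_lt hab')
        have hval : (a + b) * ((a / (a + b)) * h p1 + (b / (a + b)) * h p2)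
            = a * h p1 + b * h p2 := by field_simp
        linarith [hval ▸ hmul]
    -- special points
    have hP0 : ((0:ℝ), (0:ℝ)) ∈ Δ := by rw [hΔ]; exact ⟨le_refl _, le_refl _, by norm_num⟩
    have hP1 : ((1:ℝ), (0:ℝ)) ∈ Δ := by rw [hΔ]; exact ⟨by norm_num, le_refl _, by norm_num⟩
    have hP2 : ((1 - K₂), K₂) ∈ Δ := by rw [hΔ]; exact ⟨by simp; linarith, by simp; linarith, by simp⟩
    have hP3 : ((0:ℝ), (1 + K₂)/2) ∈ Δ := by rw [hΔ]; exact ⟨le_refl _, by simp; linarith, by simp; linarith⟩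
    have hP4 : ((0:ℝ), (1:ℝ)) ∈ Δ := by rw [hΔ]; exact ⟨le_refl _, by norm_num, by norm_num⟩
    -- fbar values at special points
    have f0 : fbar (0, 0) = 0 := by
      rw [hfbar]; simp only
      rw [max_eq_right (by norm_num; linarith), max_eq_right (by norm_num; linarith)]; ring
    have f1 : fbar (1, 0) = max (-K₁) 0 := by
      rw [hfbar]; simp only
      rw [max_eq_right (by norm_num; linarith : 2*(0:ℝ)+1-1-K₂ ≤ 0)]
      norm_num
    have f2 : fbar (1 - K₂, K₂) = K₂ - K₁ := by
      rw [hfbar]; simp only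
      have e1 : 2 * K₂ + (1 - K₂) - 1 - K₁ = K₂ - K₁ := by ring
      have e2 : 2 * K₂ + (1 - K₂) - 1 - K₂ = 0 := by ring
      rw [e1, e2, max_eq_left (by linarith), max_self]; ring
    have f3 : fbar (0, (1 + K₂)/2) = K₂ - K₁ := by
      rw [hfbar]; simp only
      have e1 : 2 * ((1 + K₂)/2) + 0 - 1 - K₁ = K₂ - K₁ := by ring
      have e2 : 2 * ((1 + K₂)/2) + 0 - 1 - K₂ = 0 := by ring
      rw [e1, e2, max_eq_left (by linarith), max_self]; ring
    have f4 : fbar (0, 1) = K₂ - K₁ := by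
      rw [hfbar]; simp only
      rw [max_eq_left (by norm_num; linarith), max_eq_left (by norm_num; linarith)]; ring
    have g0 := hge _ hP0; rw [f0] at g0
    have g1 := hge _ hP1; rw [f1] at g1
    have g2 := hge _ hP2; rw [f2] at g2
    have g3 := hge _ hP3; rw [f3] at g3
    have g4 := hge _ hP4; rw [f4] at g4
    obtain ⟨β, γ⟩ := p
    rw [hΔ] at hp
    obtain ⟨hx, hy, hxy⟩ := hp
    simp only at hx hy hxy
    rw [hV]
    simp only
    by_cases hc1 : K₂ ≤ 2 * γ + β - 1
    · rw [if_pos hc1]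
      -- weights on P4, P3, P2
      have ha : 0 ≤ (2 * γ + β - 1 - K₂) / (1 - K₂) := by apply div_nonneg <;> linarith
      have hb : 0 ≤ 2 * (1 - β - γ) / (1 - K₂) := by apply div_nonneg <;> linarith
      have hc : 0 ≤ β / (1 - K₂) := by apply div_nonneg <;> linarith
      have habc : (2 * γ + β - 1 - K₂) / (1 - K₂) + 2 * (1 - β - γ) / (1 - K₂) + β / (1 - K₂) = 1 := by
        field_simp
        ring
      have htri := tri _ _ _ hP4 hP3 hP2 _ _ _ ha hb hc habc
      have hcomb : ((2 * γ + β - 1 - K₂) / (1 - K₂)) • ((0:ℝ), (1:ℝ))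
          + (2 * (1 - β - γ) / (1 - K₂)) • ((0:ℝ), (1 + K₂)/2)
          + (β / (1 - K₂)) • ((1 - K₂), K₂) = (β, γ) := by
        simp only [Prod.smul_mk, Prod.mk_add_mk, smul_eq_mul, Prod.mk.injEq]
        constructor
        · field_simp; ring
        · field_simp; ring
      rw [hcomb] at htri
      nlinarith [mul_le_mul_of_nonneg_left g4 ha, mul_le_mul_of_nonneg_left g3 hb,
        mul_le_mul_of_nonneg_left g2 hc]
    · rw [if_neg hc1]
      push_neg at hc1
      by_cases hc2 : K₂ ≤ γ / (γ + β)
      · rw [if_pos hc2]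
        have hd : 0 < γ + β := by
          rcases lt_or_ge 0 (γ + β) with hh | hh
          · exact hh
          · exfalso
            have hβ0 : β = 0 := by linarith
            have hγ0 : γ = 0 := by linarith
            rw [hβ0, hγ0] at hc2; norm_num at hc2; linarith
        have hc2' : K₂ * (γ + β) ≤ γ := by rw [le_div_iff₀ hd] at hc2; linarith
        -- weights on P0, P3, P2
        have ha : 0 ≤ 1 - (β + 2 * γ) / (1 + K₂) := by
          rw [sub_nonneg, div_le_one (by linarith)]; linarith
        have hb : 0 ≤ (2 * γ * (1 - K₂) - 2 * K₂ * β) / ((1 - K₂) * (1 + K₂)) := by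
          apply div_nonneg
          · nlinarith
          · nlinarith
        have hc : 0 ≤ β / (1 - K₂) := by apply div_nonneg <;> linarith
        have habc : (1 - (β + 2 * γ) / (1 + K₂))
            + (2 * γ * (1 - K₂) - 2 * K₂ * β) / ((1 - K₂) * (1 + K₂)) + β / (1 - K₂) = 1 := by
          field_simp
          ring
        have htri := tri _ _ _ hP0 hP3 hP2 _ _ _ ha hb hc habc
        have hcomb : (1 - (β + 2 * γ) / (1 + K₂)) • ((0:ℝ), (0:ℝ))
            + ((2 * γ * (1 - K₂) - 2 * K₂ * β) / ((1 - K₂) * (1 + K₂))) • ((0:ℝ), (1 + K₂)/2)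
            + (β / (1 - K₂)) • ((1 - K₂), K₂) = (β, γ) := by
          simp only [Prod.smul_mk, Prod.mk_add_mk, smul_eq_mul, Prod.mk.injEq]
          constructor
          · field_simp; ring
          · field_simp; ring
        rw [hcomb] at htri
        have hval : (2 * γ + β) * (K₂ - K₁) / (K₂ + 1)
            = ((2 * γ * (1 - K₂) - 2 * K₂ * β) / ((1 - K₂) * (1 + K₂))) * (K₂ - K₁)
              + (β / (1 - K₂)) * (K₂ - K₁) := by
          field_simp
          ring
        rw [hval]
        nlinarith [mul_le_mul_of_nonneg_left g0 ha, mul_le_mul_of_nonneg_left g3 hb,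
          mul_le_mul_of_nonneg_left g2 hc]
      · rw [if_neg hc2]
        push_neg at hc2
        have hc2' : γ ≤ K₂ * (γ + β) := by
          rcases lt_or_ge 0 (γ + β) with hh | hh
          · rw [div_lt_iff₀ hh] at hc2; linarith
          · have hβ0 : β = 0 := by linarith
            have hγ0 : γ = 0 := by linarith
            rw [hβ0, hγ0]; ring_nf; positivity
        -- weights on P0, P1, P2
        have ha : 0 ≤ 1 - β - γ := by linarith
        have hb : 0 ≤ β - (1 - K₂) * γ / K₂ := by
          rw [sub_nonneg, div_le_iff₀ hK₂l]; nlinarith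
        have hc : 0 ≤ γ / K₂ := by apply div_nonneg <;> linarith
        have habc : (1 - β - γ) + (β - (1 - K₂) * γ / K₂) + γ / K₂ = 1 := by
          field_simp
          ring
        have htri := tri _ _ _ hP0 hP1 hP2 _ _ _ ha hb hc habc
        have hcomb : (1 - β - γ) • ((0:ℝ), (0:ℝ)) + (β - (1 - K₂) * γ / K₂) • ((1:ℝ), (0:ℝ))
            + (γ / K₂) • ((1 - K₂), K₂) = (β, γ) := by
          simp only [Prod.smul_mk, Prod.mk_add_mk, smul_eq_mul, Prod.mk.injEq]
          constructor
          · field_simp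
            ring
          · field_simp; ring
        rw [hcomb] at htri
        split_ifs with h0
        · rw [max_eq_right (by linarith : -K₁ ≤ 0)] at g1
          have hval : γ * (K₂ - K₁) / K₂ = (γ / K₂) * (K₂ - K₁) := by ring
          rw [hval]
          nlinarith [mul_le_mul_of_nonneg_left g0 ha, mul_le_mul_of_nonneg_left g1 hb,
            mul_le_mul_of_nonneg_left g2 hc]
        · push_neg at h0
          rw [max_eq_left (by linarith : (0:ℝ) ≤ -K₁)] at g1
          have hval : γ * (1 - K₁) - β * K₁ = (β - (1 - K₂) * γ / K₂) * (-K₁) + (γ / K₂) * (K₂ - K₁) := by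
            field_simp
            ring
          rw [hval]
          nlinarith [mul_le_mul_of_nonneg_left g0 ha, mul_le_mul_of_nonneg_left g1 hb,
            mul_le_mul_of_nonneg_left g2 hc]
end
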